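/- Let G be a k-connected graph of order n ≥ 3 with minimum degree δ and Laplacian spectral radius μ₁(G). If μ₁(G) < nδ/(n−k), then G is Hamiltonian-connected. -/

import Mathlib

open SimpleGraph Finset Matrix

variable {V : Type*} [Fintype V] [DecidableEq V]

def SimpleGraph.IsHamiltonianConnected (G : SimpleGraph V) : Prop :=
  ∀ u v : V, u ≠ v → ∃ p : G.Walk u v, p.IsHamiltonian

def SimpleGraph.IsTraceable (G : SimpleGraph V) : Prop :=
  ∃ (u v : V) (p : G.Walk u v), p.IsHamiltonian

def SimpleGraph.IsHomogeneouslyTraceable (G : SimpleGraph V) : Prop :=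
  ∀ u : V, ∃ (v : V) (p : G.Walk u v), p.IsHamiltonian

/-- `G` is `k`-connected: more than `k` vertices, and removing fewer than `k`
vertices leaves a connected graph. -/
def SimpleGraph.IsKConnected (G : SimpleGraph V) (k : ℕ) : Prop :=
  k < Fintype.card V ∧
    ∀ S : Finset V, S.card < k → (G.induce ((↑S : Set V)ᶜ)).Connected

def SimpleGraph.IsIndependentSet (G : SimpleGraph V) (s : Finset V) : Prop :=
  ∀ u ∈ s, ∀ v ∈ s, ¬ G.Adj u v

noncomputable def lapHerm (G : SimpleGraph V) [DecidableRel G.Adj] :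
    (G.lapMatrix ℝ).IsHermitian := (G.posSemidef_lapMatrix ℝ).1

/-- Laplacian spectral radius μ₁. -/
noncomputable def lapSpecRad (G : SimpleGraph V) [DecidableRel G.Adj] : ℝ :=
  ⨆ i, (lapHerm G).eigenvalues i

noncomputable def adjHerm (G : SimpleGraph V) [DecidableRel G.Adj] :
    (G.adjMatrix ℝ).IsHermitian := by
  rw [Matrix.IsHermitian, conjTranspose_eq_transpose_of_trivial, isSymm_adjMatrix]

/-- Adjacency spectral radius λ₁. -/
noncomputable def adjSpecRad (G : SimpleGraph V) [DecidableRel G.Adj] : ℝ :=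
  ⨆ i, (adjHerm G).eigenvalues i

/-- Smallest adjacency eigenvalue λ_n. -/
noncomputable def adjSpecMin (G : SimpleGraph V) [DecidableRel G.Adj] : ℝ :=
  ⨅ i, (adjHerm G).eigenvalues i

/-- The join `K₁ ∇ G`: a new universal vertex added to `G`. -/
def joinK1 (G : SimpleGraph V) : SimpleGraph (Option V) where
  Adj a b := match a, b with
    | none, none => False
    | none, some _ => True
    | some _, none => True
    | some u, some v => G.Adj u v
  symm := ⟨by rintro (_|u) (_|v) h <;> simp_all [G.adj_symm]⟩
  loopless := ⟨by rintro (_|u) h <;> simp_all⟩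



set_option linter.unusedSectionVars false
set_option maxHeartbeats 1000000

/-- Rayleigh: for a real symmetric matrix, the quadratic form is at most
(sup of eigenvalues) times the norm squared. -/
lemma rayleigh_le [Nonempty V] {A : Matrix V V ℝ} (hA : A.IsHermitian) (x : V → ℝ) :
    x ⬝ᵥ (A *ᵥ x) ≤ (⨆ i, hA.eigenvalues i) * (x ⬝ᵥ x) := by
  set μ := ⨆ i, hA.eigenvalues i with hμ
  have hle : ∀ i, hA.eigenvalues i ≤ μ := fun i => le_ciSup (Set.Finite.bddAbove (Set.finite_range _)) i
  have hpsd : PosSemidef (μ • (1 : Matrix V V ℝ) - A) := by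
    have hst := hA.spectral_theorem
    have hU : (hA.eigenvectorUnitary : Matrix V V ℝ) * (star (hA.eigenvectorUnitary : Matrix V V ℝ)) = 1 := by
      exact (Matrix.mem_unitaryGroup_iff).mp hA.eigenvectorUnitary.2
    have key : μ • (1 : Matrix V V ℝ) - A
        = (hA.eigenvectorUnitary : Matrix V V ℝ) * diagonal (fun i => μ - hA.eigenvalues i)
          * (star (hA.eigenvectorUnitary : Matrix V V ℝ)) := by
      have h1 : μ • (1 : Matrix V V ℝ)
          = (hA.eigenvectorUnitary : Matrix V V ℝ) * (μ • (1 : Matrix V V ℝ))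
            * (star (hA.eigenvectorUnitary : Matrix V V ℝ)) := by
        rw [mul_smul_comm, smul_mul_assoc, mul_one, hU]
      calc μ • (1 : Matrix V V ℝ) - A
          = (hA.eigenvectorUnitary : Matrix V V ℝ) * (μ • (1 : Matrix V V ℝ))
            * (star (hA.eigenvectorUnitary : Matrix V V ℝ))
            - (hA.eigenvectorUnitary : Matrix V V ℝ) * diagonal (RCLike.ofReal ∘ hA.eigenvalues)
            * (star (hA.eigenvectorUnitary : Matrix V V ℝ)) := by rw [← h1]; exact congrArg (μ • (1 : Matrix V V ℝ) - ·) hst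
        _ = _ := by
            rw [← sub_mul, ← mul_sub]
            congr 1
            congr 1
            ext i j
            by_cases h : i = j <;> simp [h, Matrix.one_apply, diagonal, RCLike.ofReal]
    rw [key]
    have : star (star (hA.eigenvectorUnitary : Matrix V V ℝ)) = (hA.eigenvectorUnitary : Matrix V V ℝ) := star_star _
    refine PosSemidef.mul_mul_conjTranspose_same ?_ _
    exact posSemidef_diagonal_iff.mpr fun i => sub_nonneg.mpr (hle i)
  have h0 := hpsd.dotProduct_mulVec_nonneg x
  simp only [star_trivial] at h0
  have : x ⬝ᵥ ((μ • (1 : Matrix V V ℝ) - A) *ᵥ x) = μ * (x ⬝ᵥ x) - x ⬝ᵥ (A *ᵥ x) := by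
    rw [sub_mulVec, dotProduct_sub, smul_mulVec, one_mulVec, dotProduct_smul]
    simp [smul_eq_mul]
  rw [this] at h0
  linarith [h0]

lemma lapSpecRad_nonneg [Nonempty V] (G : SimpleGraph V) [DecidableRel G.Adj] :
    0 ≤ lapSpecRad G := by
  have := (G.posSemidef_lapMatrix ℝ).eigenvalues_nonneg (Classical.arbitrary V)
  exact le_trans this (le_ciSup (Set.Finite.bddAbove (Set.finite_range _)) _)

/-- Spectral bound: for an independent set `S`, `n·δ/(n-|S|) ≤ μ₁`. -/
lemma indep_spectral_bound [Nonempty V] (G : SimpleGraph V) [DecidableRel G.Adj]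
    (hδ : 1 ≤ G.minDegree) {S : Finset V} (hS : G.IsIndependentSet S) (hne : S.Nonempty) :
    (Fintype.card V : ℝ) * G.minDegree / ((Fintype.card V : ℝ) - S.card) ≤ lapSpecRad G := by
  set n := Fintype.card V
  set s := S.card
  -- S is a proper subset
  have hlt : s < n := by
    obtain ⟨a, ha⟩ := hne
    have hdeg : 0 < G.degree a := lt_of_lt_of_le hδ (G.minDegree_le_degree a)
    rw [← card_neighborFinset_eq_degree, card_pos] at hdeg
    obtain ⟨b, hb⟩ := hdeg
    rw [mem_neighborFinset] at hb
    have hbS : b ∉ S := fun hbS => hS a ha b hbS hb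
    have hSne : S ≠ univ := fun h => hbS (h ▸ mem_univ b)
    have := Finset.card_lt_card (Finset.ssubset_univ_iff.mpr hSne)
    simpa [card_univ] using this
  -- test vector
  set x : V → ℝ := fun i => if i ∈ S then ((n : ℝ) - s) else (-(s : ℝ)) with hx
  have hform : x ⬝ᵥ (G.lapMatrix ℝ *ᵥ x) =
      (∑ i, ∑ j, if G.Adj i j then (x i - x j)^2 else 0) / 2 := by
    rw [← Matrix.toLinearMap₂'_apply', G.lapMatrix_toLinearMap₂' (R := ℝ)]
  have hterm : ∀ i ∈ S, ∀ j, (if G.Adj i j then (x i - x j)^2 else 0)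
      = if G.Adj i j then (n : ℝ)^2 else 0 := by
    intro i hi j
    by_cases h : G.Adj i j
    · have hj : j ∉ S := fun hj => hS i hi j hj h
      simp only [if_pos h, hx, if_pos hi, if_neg hj]
      ring
    · simp [h]
  set F : V → V → ℝ := fun i j => if G.Adj i j then (x i - x j)^2 else 0 with hF
  have hFnn : ∀ i j, 0 ≤ F i j := by
    intro i j; simp only [hF]; split <;> positivity
  have hFsymm : ∀ i j, F i j = F j i := by
    intro i j; simp only [hF]
    rw [if_congr (G.adj_comm i j) rfl rfl]
    congr 1; ring
  have hdegsum : ∀ i ∈ S, ∑ j, F i j = (G.degree i : ℝ) * (n : ℝ)^2 := by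
    intro i hi
    rw [sum_congr rfl (fun j _ => hterm i hi j), ← Finset.sum_filter]
    have hfil : Finset.filter (fun j => G.Adj i j) univ = G.neighborFinset i := by
      ext j; simp [mem_neighborFinset]
    rw [sum_const, hfil, card_neighborFinset_eq_degree, nsmul_eq_mul]
  have hFS0 : ∀ i ∈ S, ∀ j ∈ S, F i j = 0 := by
    intro i hi j hj; simp only [hF]; rw [if_neg (hS i hi j hj)]
  have hdelta : ∀ (T : Finset V), T ⊆ S →
      ∑ i ∈ T, (G.degree i : ℝ) * (n : ℝ)^2 ≥ (T.card : ℝ) * G.minDegree * (n : ℝ)^2 := by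
    intro T _
    calc (T.card : ℝ) * (G.minDegree : ℝ) * (n : ℝ)^2
        = ∑ _i ∈ T, (G.minDegree : ℝ) * (n : ℝ)^2 := by rw [sum_const, nsmul_eq_mul]; ring
      _ ≤ ∑ i ∈ T, (G.degree i : ℝ) * (n : ℝ)^2 := by
          apply Finset.sum_le_sum
          intro i _
          have h1 : (G.minDegree : ℝ) ≤ (G.degree i : ℝ) := by
            exact_mod_cast G.minDegree_le_degree i
          have hns : (0:ℝ) ≤ (n:ℝ)^2 := by positivity
          nlinarith
  have hpart2 : ∑ i ∈ Sᶜ, ∑ j, F i j ≥ ∑ j ∈ S, (G.degree j : ℝ) * (n : ℝ)^2 := by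
    have h1 : ∑ i ∈ Sᶜ, ∑ j, F i j ≥ ∑ i ∈ Sᶜ, ∑ j ∈ S, F i j := by
      apply Finset.sum_le_sum
      intro i _
      exact Finset.sum_le_sum_of_subset_of_nonneg (subset_univ S) (fun j _ _ => hFnn i j)
    refine le_trans ?_ h1
    rw [Finset.sum_comm]
    apply Finset.sum_le_sum
    intro j hj
    have hcs : ∑ i ∈ Sᶜ, F j i = (G.degree j : ℝ) * (n : ℝ)^2 := by
      have hsplit := Finset.sum_add_sum_compl S (fun i => F j i)
      have hz : ∑ i ∈ S, F j i = 0 :=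
        Finset.sum_eq_zero (fun i hi => hFS0 j hj i hi)
      rw [hz, zero_add] at hsplit
      rw [hsplit, hdegsum j hj]
    rw [show ∑ i ∈ Sᶜ, F i j = ∑ i ∈ Sᶜ, F j i from
      Finset.sum_congr rfl (fun i _ => hFsymm i j), hcs]
  have hdoub : ∑ i, ∑ j, F i j ≥ 2 * ((s : ℝ) * G.minDegree * (n : ℝ)^2) := by
    have hsplit := Finset.sum_add_sum_compl S (fun i => ∑ j, F i j)
    have h1 : ∑ i ∈ S, ∑ j, F i j = ∑ i ∈ S, (G.degree i : ℝ) * (n : ℝ)^2 :=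
      sum_congr rfl hdegsum
    have h2 := hdelta S (Finset.Subset.refl S)
    linarith [hpart2]
  have hxx : x ⬝ᵥ x = (s : ℝ) * ((n : ℝ) - s) * n := by
    unfold dotProduct
    have hsplit := Finset.sum_add_sum_compl S (fun i => x i * x i)
    have h1 : ∑ i ∈ S, x i * x i = (s : ℝ) * ((n:ℝ) - s)^2 := by
      have e : ∑ i ∈ S, x i * x i = ∑ _i ∈ S, ((n:ℝ) - s)^2 :=
        Finset.sum_congr rfl (fun i hi => by simp only [hx]; rw [if_pos hi]; ring)
      rw [e, sum_const, nsmul_eq_mul]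
    have h2 : ∑ i ∈ Sᶜ, x i * x i = ((n:ℝ) - s) * (s:ℝ)^2 := by
      have e : ∑ i ∈ Sᶜ, x i * x i = ∑ _i ∈ Sᶜ, ((s:ℝ))^2 :=
        Finset.sum_congr rfl (fun i hi => by
          simp only [hx]; rw [if_neg (Finset.mem_compl.mp hi)]; ring)
      rw [e, sum_const, nsmul_eq_mul, Finset.card_compl]
      have e2 : ((Fintype.card V - S.card : ℕ) : ℝ) = (n : ℝ) - s := by
        exact Nat.cast_sub (le_of_lt hlt)
      rw [e2]
    rw [← hsplit, h1, h2]; ring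
  have hray : x ⬝ᵥ (G.lapMatrix ℝ *ᵥ x) ≤ lapSpecRad G * (x ⬝ᵥ x) :=
    rayleigh_le (lapHerm G) x
  rw [hform, hxx] at hray
  have hs1 : (1 : ℝ) ≤ (s : ℝ) := by exact_mod_cast Finset.card_pos.mpr hne
  have hn0 : (0 : ℝ) < (n : ℝ) := by
    have : 0 < n := Fintype.card_pos
    exact_mod_cast this
  have hns : (0 : ℝ) < (n : ℝ) - s := by
    have : (s : ℝ) < (n : ℝ) := by exact_mod_cast hlt
    linarith
  have hkey : (s : ℝ) * G.minDegree * (n : ℝ)^2 ≤ lapSpecRad G * ((s:ℝ) * ((n:ℝ) - s) * n) := by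
    linarith [hdoub, hray]
  rw [div_le_iff₀ hns]
  by_contra hcon
  push_neg at hcon
  have hsn : (0:ℝ) < (s:ℝ) * (n:ℝ) := by nlinarith
  have hmul := mul_lt_mul_of_pos_left hcon hsn
  have e1 : (s:ℝ)*(n:ℝ)*(lapSpecRad G*((n:ℝ)-s)) = lapSpecRad G * ((s:ℝ)*((n:ℝ)-s)*n) := by ring
  have e2 : (s:ℝ)*(n:ℝ)*((n:ℝ)*G.minDegree) = (s:ℝ)*G.minDegree*(n:ℝ)^2 := by ring
  linarith [hkey, hmul, e1.ge, e1.le, e2.ge, e2.le]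

/-- A list representing a path from `u` to `v` in `G`. -/
def IsPathList (G : SimpleGraph V) (u v : V) (l : List V) : Prop :=
  l.Chain' G.Adj ∧ l.Nodup ∧ l.head? = some u ∧ l.getLast? = some v

lemma isPathList_of_walk {G : SimpleGraph V} {u v : V} (p : G.Walk u v) (hp : p.IsPath) :
    IsPathList G u v p.support := by
  refine ⟨p.isChain_adj_support, hp.support_nodup, ?_, ?_⟩
  · cases p <;> simp
  · rw [List.getLast?_eq_getLast (l := p.support) (by simp), p.getLast_support]

set_option linter.unusedSectionVars false

lemma walk_of_chain {G : SimpleGraph V} {v : V} :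
    ∀ (l : List V), l.Chain' G.Adj → l.getLast? = some v →
      ∀ {u : V}, l.head? = some u → ∃ p : G.Walk u v, p.support = l := by
  intro l
  induction l with
  | nil => intro _ _ u hh; simp at hh
  | cons a t ih =>
    intro hc hl u hh
    obtain rfl : a = u := by simpa using hh
    cases t with
    | nil =>
      obtain rfl : a = v := by simpa using hl
      exact ⟨SimpleGraph.Walk.nil, by simp⟩
    | cons b t' =>
      have hadj : G.Adj a b := (List.isChain_cons_cons.mp hc).1
      obtain ⟨p, hs⟩ := ih (List.isChain_cons_cons.mp hc).2
        (by rwa [List.getLast?_cons_cons] at hl) rfl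
      exact ⟨SimpleGraph.Walk.cons hadj p, by simp [hs]⟩

lemma walk_of_isPathList {G : SimpleGraph V} {u v : V} {l : List V} (h : IsPathList G u v l) :
    ∃ p : G.Walk u v, p.IsPath ∧ p.support = l := by
  obtain ⟨hc, hn, hh, hl⟩ := h
  obtain ⟨p, hs⟩ := walk_of_chain _ hc hl hh
  exact ⟨p, SimpleGraph.Walk.IsPath.mk' (hs ▸ hn), hs⟩

/-- Existence of a maximal path list between two connected vertices. -/
lemma exists_maximal_pathList {G : SimpleGraph V} {u v : V} (h : G.Reachable u v) :
    ∃ L : List V, IsPathList G u v L ∧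
      ∀ L' : List V, IsPathList G u v L' → L'.length ≤ L.length := by
  obtain ⟨p⟩ := h
  have h0 : IsPathList G u v (p.toPath : G.Walk u v).support :=
    isPathList_of_walk _ (p.toPath).2
  set s : Set ℕ := {m | ∃ l : List V, IsPathList G u v l ∧ l.length = m} with hs
  have hne : s.Nonempty := ⟨_, _, h0, rfl⟩
  have hbdd : BddAbove s := by
    refine ⟨Fintype.card V, fun m hm => ?_⟩
    obtain ⟨l, hl, rfl⟩ := hm
    exact hl.2.1.length_le_card
  obtain ⟨l, hl, hlen⟩ := Nat.sSup_mem hne hbdd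
  exact ⟨l, hl, fun L' hL' => hlen ▸ le_csSup hbdd ⟨L', hL', rfl⟩⟩

/-- Helper: a rearranged longer path list contradicts maximality. -/
lemma pathList_contra {G : SimpleGraph V} {u v : V} {L : List V}
    (hL : IsPathList G u v L)
    (hmax : ∀ L', IsPathList G u v L' → L'.length ≤ L.length)
    {M Q : List V} (hperm : M.Perm (L ++ Q)) (hQne : Q ≠ [])
    (hQd : ∀ a ∈ Q, a ∉ L) (hQn : Q.Nodup)
    (hMc : M.Chain' G.Adj) (hMh : M.head? = some u) (hMl : M.getLast? = some v) : False := by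
  have hnodup : (L ++ Q).Nodup :=
    List.nodup_append'.mpr ⟨hL.2.1, hQn, fun _ ha hb => hQd _ hb ha⟩
  have hM : IsPathList G u v M := ⟨hMc, hperm.nodup_iff.mpr hnodup, hMh, hMl⟩
  have hlen := hmax M hM
  rw [hperm.length_eq, List.length_append] at hlen
  have : 0 < Q.length := List.length_pos_iff.mpr hQne
  omega

lemma head?_append_left {α : Type*} {l₁ : List α} (l₂ l₂' : List α) (h : l₁ ≠ []) :
    (l₁ ++ l₂).head? = (l₁ ++ l₂').head? := by
  cases l₁ with
  | nil => exact absurd rfl h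
  | cons a t => simp

lemma getLast?_append_right {α : Type*} (l₁ l₁' : List α) {l₂ : List α} (h : l₂ ≠ []) :
    (l₁ ++ l₂).getLast? = (l₁' ++ l₂).getLast? := by
  rw [List.getLast?_append, List.getLast?_append,
    Option.or_of_isSome (List.getLast?_isSome.mpr h), Option.or_of_isSome (List.getLast?_isSome.mpr h)]

/-- Insert surgery: if two consecutive vertices of a maximal path list both have
neighbours in the off-path region `H`, contradiction. -/
lemma ins_surgery {G : SimpleGraph V} {u v : V} {L : List V}
    (hL : IsPathList G u v L)
    (hmax : ∀ L', IsPathList G u v L' → L'.length ≤ L.length)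
    {A B Q : List V} {y z x₁ x₂ : V}
    (hdec : L = A ++ [y] ++ [z] ++ B)
    (hQC : Q.Chain' G.Adj) (hQN : Q.Nodup) (hQd : ∀ a ∈ Q, a ∉ L)
    (hQh : Q.head? = some x₁) (hQl : Q.getLast? = some x₂)
    (h1 : G.Adj y x₁) (h2 : G.Adj x₂ z) : False := by
  have hQne : Q ≠ [] := by rintro rfl; simp at hQh
  set M : List V := A ++ [y] ++ Q ++ [z] ++ B with hM
  have hperm : M.Perm (L ++ Q) := by
    rw [← Multiset.coe_eq_coe]
    have : ((M : Multiset V)) = (A : Multiset V) + ([y] : List V) + Q + ([z] : List V) + B := by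
      simp only [hM, Multiset.coe_singleton, ← Multiset.cons_coe, ← Multiset.coe_add,
        ← Multiset.singleton_add]
    rw [this]
    have : ((L ++ Q : List V) : Multiset V)
        = (A : Multiset V) + ([y] : List V) + ([z] : List V) + B + Q := by
      simp only [hdec, Multiset.coe_singleton, ← Multiset.cons_coe, ← Multiset.coe_add,
        ← Multiset.singleton_add]
    rw [this]
    abel
  -- chain'
  have hLC := hL.1
  rw [hdec] at hLC
  have hMc : M.Chain' G.Adj := by
    simp only [List.Chain'] at hLC ⊢
    rw [hM, List.append_assoc, List.append_assoc, List.append_assoc, List.isChain_append]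
    rw [List.append_assoc, List.append_assoc, List.isChain_append] at hLC
    obtain ⟨hA, hrest, hglueA⟩ := hLC
    rw [List.isChain_append] at hrest
    obtain ⟨-, hzB, hglueY⟩ := hrest
    rw [List.isChain_append] at hzB
    obtain ⟨-, hB, hglueZ⟩ := hzB
    refine ⟨hA, ?_, ?_⟩
    · rw [List.isChain_append]
      refine ⟨List.isChain_singleton y, ?_, ?_⟩
      · rw [List.isChain_append]
        refine ⟨hQC, ?_, ?_⟩
        · rw [List.isChain_append]
          exact ⟨List.isChain_singleton z, hB, hglueZ⟩
        · intro a ha b hb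
          rw [hQl] at ha
          rw [List.head?_append, List.head?_cons] at hb
          simp at ha hb
          subst ha; subst hb
          exact h2
      · intro a ha b hb
        simp at ha
        rw [List.head?_append, hQh] at hb
        simp at hb
        subst ha; subst hb
        exact h1
    · intro a ha b hb
      refine hglueA a ha b ?_
      rw [List.head?_append, List.head?_cons] at hb ⊢
      simpa using hb
  have hMh : M.head? = some u := by
    have := hL.2.2.1
    rw [hdec] at this
    rw [hM]
    rw [show A ++ [y] ++ Q ++ [z] ++ B = (A ++ [y]) ++ (Q ++ [z] ++ B) by simp,
      head?_append_left (Q ++ [z] ++ B) ([z] ++ B) (by simp)]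
    rw [show A ++ [y] ++ ([z] ++ B) = A ++ [y] ++ [z] ++ B by simp]
    exact this
  have hMl : M.getLast? = some v := by
    have := hL.2.2.2
    rw [hdec] at this
    rw [hM]
    by_cases hB : B = []
    · subst hB
      rw [show A ++ [y] ++ Q ++ [z] ++ [] = (A ++ [y] ++ Q) ++ [z] by simp,
        List.getLast?_concat]
      rw [show A ++ [y] ++ [z] ++ [] = (A ++ [y]) ++ [z] by simp, List.getLast?_concat] at this
      exact this
    · rw [show A ++ [y] ++ Q ++ [z] ++ B = (A ++ [y] ++ Q ++ [z]) ++ B by simp,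
        getLast?_append_right _ (A ++ [y] ++ [z]) hB]
      rw [show A ++ [y] ++ [z] ++ B = (A ++ [y] ++ [z]) ++ B by simp] at this
      exact this
  exact pathList_contra hL hmax hperm hQne hQd hQN hMc hMh hMl

/-- Crossing surgery: two attachments `y₁, y₂` (in order) with successors `z₁, z₂`
that are adjacent give a longer path. -/
lemma cross_surgery {G : SimpleGraph V} {u v : V} {L : List V}
    (hL : IsPathList G u v L)
    (hmax : ∀ L', IsPathList G u v L' → L'.length ≤ L.length)
    {A B C Q : List V} {y₁ z₁ y₂ z₂ x₁ x₂ : V}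
    (hdec : L = A ++ [y₁] ++ [z₁] ++ B ++ [y₂] ++ [z₂] ++ C)
    (hQC : Q.Chain' G.Adj) (hQN : Q.Nodup) (hQd : ∀ a ∈ Q, a ∉ L)
    (hQh : Q.head? = some x₁) (hQl : Q.getLast? = some x₂)
    (h1 : G.Adj y₁ x₁) (h2 : G.Adj x₂ y₂) (h3 : G.Adj z₁ z₂) : False := by
  have hQne : Q ≠ [] := by rintro rfl; simp at hQh
  set M : List V := A ++ [y₁] ++ Q ++ [y₂] ++ (B.reverse ++ [z₁]) ++ [z₂] ++ C with hM
  have hperm : M.Perm (L ++ Q) := by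
    rw [← Multiset.coe_eq_coe]
    have e1 : ((M : Multiset V)) = (A : Multiset V) + ([y₁] : List V) + Q + ([y₂] : List V)
        + B + ([z₁] : List V) + ([z₂] : List V) + C := by
      simp only [hM, Multiset.coe_singleton, ← Multiset.cons_coe, ← Multiset.coe_add,
        ← Multiset.singleton_add, Multiset.coe_reverse]
      abel
    have e2 : ((L ++ Q : List V) : Multiset V) = (A : Multiset V) + ([y₁] : List V)
        + ([z₁] : List V) + B + ([y₂] : List V) + ([z₂] : List V) + C + Q := by
      simp only [hdec, Multiset.coe_singleton, ← Multiset.cons_coe, ← Multiset.coe_add,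
        ← Multiset.singleton_add]
    rw [e1, e2]
    abel
  -- decompose the chain of L
  have hLC := hL.1
  have hdec' : L = A ++ ([y₁] ++ ([z₁] ++ (B ++ ([y₂] ++ ([z₂] ++ C))))) := by
    rw [hdec]; simp [List.append_assoc]
  rw [hdec'] at hLC
  simp only [List.Chain'] at hLC
  rw [List.isChain_append] at hLC
  obtain ⟨hA, hLC, gA⟩ := hLC
  rw [List.isChain_append] at hLC
  obtain ⟨-, hLC, gy₁⟩ := hLC
  rw [List.isChain_append] at hLC
  obtain ⟨-, hLC, gz₁⟩ := hLC
  rw [List.isChain_append] at hLC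
  obtain ⟨hB, hLC, gB⟩ := hLC
  rw [List.isChain_append] at hLC
  obtain ⟨-, hLC, gy₂⟩ := hLC
  rw [List.isChain_append] at hLC
  obtain ⟨-, hC, gz₂⟩ := hLC
  -- chain of M
  have hMc : M.Chain' G.Adj := by
    have hMr : M = A ++ ([y₁] ++ (Q ++ ([y₂] ++ ((B.reverse ++ [z₁]) ++ ([z₂] ++ C))))) := by
      rw [hM]; simp [List.append_assoc]
    rw [hMr]
    simp only [List.Chain']
    rw [List.isChain_append]
    refine ⟨hA, ?_, ?_⟩
    · rw [List.isChain_append]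
      refine ⟨List.isChain_singleton _, ?_, ?_⟩
      · rw [List.isChain_append]
        refine ⟨hQC, ?_, ?_⟩
        · rw [List.isChain_append]
          refine ⟨List.isChain_singleton _, ?_, ?_⟩
          · rw [List.isChain_append]
            refine ⟨?_, ?_, ?_⟩
            · -- chain' (B.reverse ++ [z₁])
              rw [List.isChain_append]
              refine ⟨?_, List.isChain_singleton _, ?_⟩
              · rw [List.isChain_reverse]
                exact hB.imp (fun a b h => G.adj_symm h)
              · -- ∀ a ∈ B.reverse.getLast?, R a z₁
                intro a ha b hb
                simp only [List.head?_cons, Option.mem_def, Option.some.injEq] at hb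
                subst hb
                rw [List.getLast?_reverse] at ha
                cases B with
                | nil => simp at ha
                | cons b0 B' =>
                  simp only [List.head?_cons, Option.mem_def, Option.some.injEq] at ha
                  subst ha
                  have := gz₁ z₁ (by simp) b0 (by simp)
                  exact G.adj_symm this
            · rw [List.isChain_append]
              exact ⟨List.isChain_singleton _, hC, gz₂⟩
            · -- glue z₁ – z₂
              intro a ha b hb
              rw [List.getLast?_append, List.getLast?_singleton] at ha
              simp only [Option.or_some, Option.some_or, Option.mem_def, Option.some.injEq] at ha
              subst ha
              rw [List.head?_append, List.head?_cons] at hb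
              simp only [Option.or_some, Option.some_or, Option.mem_def, Option.some.injEq] at hb
              subst hb
              exact h3
          · -- glue y₂ – head (B.reverse ++ [z₁])
            intro a ha b hb
            simp only [List.getLast?_singleton, Option.mem_def, Option.some.injEq] at ha
            subst ha
            rw [List.head?_append, List.head?_append, List.head?_reverse] at hb
            cases B with
            | nil =>
              simp only [List.getLast?_nil, List.head?_cons, Option.none_or, Option.or_some, Option.some_or, Option.getD_none,
                Option.mem_def, Option.some.injEq] at hb
              subst hb
              exact G.adj_symm (gz₁ z₁ (by simp) y₂ (by simp))
            | cons b0 B' =>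
              have hgl : (b0 :: B').getLast? = some ((b0 :: B').getLast (by simp)) :=
                List.getLast?_eq_getLast (by simp)
              rw [hgl] at hb
              simp only [Option.or_some, Option.some_or, Option.mem_def, Option.some.injEq] at hb
              subst hb
              exact G.adj_symm (gB _ (by rw [hgl]; rfl) y₂ (by simp))
        · -- glue x₂ – y₂
          intro a ha b hb
          rw [hQl] at ha
          rw [List.head?_append, List.head?_cons] at hb
          simp only [Option.or_some, Option.some_or, Option.mem_def, Option.some.injEq] at ha hb
          subst ha; subst hb
          exact h2
      · -- glue y₁ – x₁
        intro a ha b hb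
        simp only [List.getLast?_singleton, Option.mem_def, Option.some.injEq] at ha
        subst ha
        rw [List.head?_append, hQh] at hb
        simp only [Option.or_some, Option.some_or, Option.mem_def, Option.some.injEq] at hb
        subst hb
        exact h1
    · -- glue A – y₁
      intro a ha b hb
      refine gA a ha b ?_
      rw [List.head?_append, List.head?_cons] at hb ⊢
      simpa using hb
  have hMh : M.head? = some u := by
    have h0 := hL.2.2.1
    rw [hdec] at h0
    rw [hM]
    rw [show A ++ [y₁] ++ Q ++ [y₂] ++ (B.reverse ++ [z₁]) ++ [z₂] ++ C
        = (A ++ [y₁]) ++ (Q ++ [y₂] ++ (B.reverse ++ [z₁]) ++ [z₂] ++ C) by simp,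
      head?_append_left _ ([z₁] ++ B ++ [y₂] ++ [z₂] ++ C) (by simp)]
    rw [show (A ++ [y₁]) ++ ([z₁] ++ B ++ [y₂] ++ [z₂] ++ C)
        = A ++ [y₁] ++ [z₁] ++ B ++ [y₂] ++ [z₂] ++ C by simp]
    exact h0
  have hMl : M.getLast? = some v := by
    have h0 := hL.2.2.2
    rw [hdec] at h0
    rw [hM]
    rw [show A ++ [y₁] ++ Q ++ [y₂] ++ (B.reverse ++ [z₁]) ++ [z₂] ++ C
        = (A ++ [y₁] ++ Q ++ [y₂] ++ (B.reverse ++ [z₁])) ++ ([z₂] ++ C) by simp,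
      getLast?_append_right _ (A ++ [y₁] ++ [z₁] ++ B ++ [y₂]) (by simp)]
    rw [show (A ++ [y₁] ++ [z₁] ++ B ++ [y₂]) ++ ([z₂] ++ C)
        = A ++ [y₁] ++ [z₁] ++ B ++ [y₂] ++ [z₂] ++ C by simp]
    exact h0
  exact pathList_contra hL hmax hperm hQne hQd hQN hMc hMh hMl

section OffPath
variable {G : SimpleGraph V}

/-- Graph of `G`-edges avoiding the list `L`. -/
def offRel (G : SimpleGraph V) (L : List V) : SimpleGraph V :=
  SimpleGraph.fromRel (fun a b => G.Adj a b ∧ a ∉ L ∧ b ∉ L)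

lemma offRel_adj {L : List V} {a b : V} :
    (offRel G L).Adj a b ↔ G.Adj a b ∧ a ∉ L ∧ b ∉ L := by
  constructor
  · rintro ⟨hne, ⟨h, h1, h2⟩ | ⟨h, h2, h1⟩⟩
    · exact ⟨h, h1, h2⟩
    · exact ⟨G.adj_symm h, h1, h2⟩
  · intro ⟨h, h1, h2⟩
    exact ⟨G.ne_of_adj h, Or.inl ⟨h, h1, h2⟩⟩

lemma offRel_reach_not_mem {L : List V} {a b : V} (h : (offRel G L).Reachable a b)
    (ha : a ∉ L) : b ∉ L := by
  obtain ⟨p⟩ := h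
  induction p with
  | nil => exact ha
  | cons hadj q ih => exact ih (offRel_adj.mp hadj).2.2

lemma reach_of_mem_support {G' : SimpleGraph V} {a b : V} (p : G'.Walk a b) :
    ∀ c ∈ p.support, G'.Reachable a c := by
  induction p with
  | nil => intro c hc; simp at hc; subst hc; rfl
  | cons hadj q ih =>
    intro c hc
    rw [SimpleGraph.Walk.support_cons] at hc
    rcases List.mem_cons.mp hc with rfl | hc
    · rfl
    · exact (SimpleGraph.Adj.reachable hadj).trans (ih c hc)

/-- A path inside the component `H` of `w` off `L`. -/
lemma exists_H_path {L : List V} {w x₁ x₂ : V}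
    (h1 : (offRel G L).Reachable w x₁) (h2 : (offRel G L).Reachable w x₂) :
    ∃ Q : List V, Q.Chain' G.Adj ∧ Q.Nodup ∧ Q.head? = some x₁ ∧ Q.getLast? = some x₂ ∧
      ∀ a ∈ Q, (offRel G L).Reachable w a := by
  have h12 : (offRel G L).Reachable x₁ x₂ := h1.symm.trans h2
  obtain ⟨p⟩ := h12
  set p' : (offRel G L).Walk x₁ x₂ := (p.toPath : (offRel G L).Walk x₁ x₂) with hp'
  have hpath : p'.IsPath := (p.toPath).2
  have hPL := isPathList_of_walk p' hpath
  refine ⟨p'.support, ?_, hPL.2.1, hPL.2.2.1, hPL.2.2.2, ?_⟩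
  · exact hPL.1.imp (fun a b hab => (offRel_adj.mp hab).1)
  · intro a ha
    exact h1.trans (reach_of_mem_support p' a ha)

lemma reach_of_induce {s : Set V} {a b : s} (h : (G.induce s).Reachable a b) :
    G.Reachable a.1 b.1 := by
  obtain ⟨p⟩ := h
  induction p with
  | nil => rfl
  | cons hadj q ih =>
    exact (SimpleGraph.Adj.reachable (by exact hadj)).trans ih

end OffPath

lemma decomp_two {α : Type*} (L : List α) (i : ℕ) (h : i + 1 < L.length) :
    L = L.take i ++ [L[i]] ++ [L[i+1]] ++ L.drop (i+2) := by
  conv_lhs => rw [← List.take_append_drop i L]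
  rw [List.drop_eq_getElem_cons (by omega), List.drop_eq_getElem_cons (by omega)]
  simp

lemma decomp_four {α : Type*} (L : List α) (i j : ℕ) (hij : i + 2 ≤ j) (hj : j + 1 < L.length) :
    L = L.take i ++ [L[i]] ++ [L[i+1]] ++ ((L.drop (i+2)).take (j-(i+2))) ++ [L[j]] ++ [L[j+1]]
      ++ L.drop (j+2) := by
  conv_lhs => rw [← List.take_append_drop i L]
  rw [List.drop_eq_getElem_cons (show i < L.length by omega),
    List.drop_eq_getElem_cons (show i + 1 < L.length by omega)]
  conv_lhs => rw [← List.take_append_drop (j - (i+2)) (L.drop (i+2))]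
  rw [List.drop_drop]
  have hji : i + 2 + (j - (i + 2)) = j := by omega
  rw [hji, List.drop_eq_getElem_cons (show j < L.length by omega),
    List.drop_eq_getElem_cons (show j + 1 < L.length by omega)]
  have htake : L.take (i+2) = L.take i ++ [L[i]] ++ [L[i+1]] := by
    rw [show L.take (i+2) = L.take (i+1) ++ (L[i+1]?).toList from List.take_succ,
      List.take_succ]
    simp [List.getElem?_eq_getElem (show i < L.length by omega),
      List.getElem?_eq_getElem (show i+1 < L.length by omega)]
  simp only [List.append_assoc, List.singleton_append, List.cons_append, List.nil_append,
    show j+1+1 = j+2 from rfl]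


theorem ce_ham_connected (G : SimpleGraph V) (k : ℕ)
    (hkn : k < Fintype.card V)
    (hcon : ∀ S : Finset V, S.card < k → (G.induce ((↑S : Set V)ᶜ)).Connected)
    (hind : ∀ S : Finset V, (∀ a ∈ S, ∀ b ∈ S, ¬ G.Adj a b) → S.card < k) :
    ∀ u v : V, u ≠ v → ∃ p : G.Walk u v, p.IsHamiltonian := by
  classical
  have hVne : Nonempty V := Fintype.card_pos_iff.mp (by omega)
  have hk2 : 2 ≤ k := by
    obtain ⟨a⟩ := hVne
    have := hind {a} (by
      intro x hx y hy
      simp only [Finset.mem_singleton] at hx hy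
      rw [hx, hy]
      exact G.loopless.irrefl _)
    simp at this; omega
  intro u v huv
  have hreach : G.Reachable u v := by
    have h0 := hcon ∅ (by simp; omega)
    have hu : u ∈ ((↑(∅ : Finset V) : Set V)ᶜ) := by simp
    have hv : v ∈ ((↑(∅ : Finset V) : Set V)ᶜ) := by simp
    exact reach_of_induce (h0.preconnected ⟨u, hu⟩ ⟨v, hv⟩)
  obtain ⟨L, hL, hmax⟩ := exists_maximal_pathList hreach
  have hnodup := hL.2.1
  have hlen2 : 2 ≤ L.length := by
    rcases L with - | ⟨a, - | ⟨b, t⟩⟩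
    · exact absurd hL.2.2.1 (by simp)
    · exfalso
      apply huv
      have h1 := hL.2.2.1
      have h2 := hL.2.2.2
      simp only [List.head?_cons, List.getLast?_singleton, Option.some.injEq] at h1 h2
      rw [← h1, ← h2]
    · simp only [List.length_cons]; omega
  by_cases hfull : L.length = Fintype.card V
  · obtain ⟨p, hp, hsup⟩ := walk_of_isPathList hL
    refine ⟨p, fun a => ?_⟩
    have huniv : L.toFinset = Finset.univ :=
      Finset.eq_univ_of_card _ (by rw [List.toFinset_card_of_nodup hnodup, hfull])
    have hmem : a ∈ L := List.mem_toFinset.mp (huniv ▸ Finset.mem_univ a)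
    rw [hsup]
    exact List.count_eq_one_of_mem hnodup hmem
  · exfalso
    have hlen_lt : L.length < Fintype.card V := lt_of_le_of_ne hnodup.length_le_card hfull
    have hw : ∃ w, w ∉ L := by
      by_contra hcontra; push_neg at hcontra
      have he : L.toFinset = Finset.univ :=
        Finset.eq_univ_iff_forall.mpr (fun a => List.mem_toFinset.mpr (hcontra a))
      have := congrArg Finset.card he
      rw [List.toFinset_card_of_nodup hnodup, Finset.card_univ] at this
      omega
    obtain ⟨w, hwL⟩ := hw
    set H : V → Prop := fun x => (offRel G L).Reachable w x with hH
    have hHw : H w := Reachable.refl w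
    have hHL : ∀ x, H x → x ∉ L := fun x hx => offRel_reach_not_mem hx hwL
    set N : Finset V := Finset.univ.filter (fun y => y ∈ L ∧ ∃ x, H x ∧ G.Adj y x) with hN
    have hNmem : ∀ y, y ∈ N ↔ (y ∈ L ∧ ∃ x, H x ∧ G.Adj y x) := by
      intro y; simp [hN]
    have hcons : ∀ (A B : List V) (y z : V),
        L = A ++ [y] ++ [z] ++ B → y ∈ N → z ∈ N → False := by
      intro A B y z hdec hy hz
      obtain ⟨-, x₁, hx₁H, hyx₁⟩ := (hNmem y).mp hy
      obtain ⟨-, x₂, hx₂H, hzx₂⟩ := (hNmem z).mp hz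
      obtain ⟨Q, hQC, hQN, hQh, hQl, hQH⟩ := exists_H_path hx₁H hx₂H
      exact ins_surgery hL hmax hdec hQC hQN (fun a ha => hHL a (hQH a ha))
        hQh hQl hyx₁ (G.adj_symm hzx₂)
    have hidx : ∀ y, y ∈ L → L.idxOf y < L.length :=
      fun y hy => List.idxOf_lt_length_iff.mpr hy
    have hidx1 : ∀ y, y ∈ L → y ≠ v → L.idxOf y + 1 < L.length := by
      intro y hy hyv
      have h1 := hidx y hy
      by_contra hcontra
      have he : L.idxOf y = L.length - 1 := by omega
      have g : L[L.idxOf y]? = some y := by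
        rw [List.getElem?_eq_getElem h1, List.getElem_idxOf h1]
      rw [he] at g
      have h4 := hL.2.2.2
      rw [List.getLast?_eq_getElem?, g] at h4
      exact hyv (Option.some.inj h4)
    set succ : V → V := fun y => L.getD (L.idxOf y + 1) y with hsucc
    have hsucc_eq : ∀ y (h : L.idxOf y + 1 < L.length),
        succ y = L[L.idxOf y + 1] :=
      fun y h => List.getD_eq_getElem L y h
    have hdecy : ∀ y, y ∈ L → y ≠ v →
        L = L.take (L.idxOf y) ++ [y] ++ [succ y] ++ L.drop (L.idxOf y + 2) := by
      intro y hy hyv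
      have h1 := hidx1 y hy hyv
      have hd := decomp_two L (L.idxOf y) h1
      rwa [List.getElem_idxOf (hidx y hy), ← hsucc_eq y h1] at hd
    have hsuccN : ∀ y, y ∈ N → y ≠ v → succ y ∉ N := by
      intro y hyN hyv hsN
      exact hcons _ _ y (succ y) (hdecy y ((hNmem y).mp hyN).1 hyv) hyN hsN
    have hsuccL : ∀ y, y ∈ L → y ≠ v → succ y ∈ L := by
      intro y hy hyv
      rw [hsucc_eq y (hidx1 y hy hyv)]
      exact List.getElem_mem _
    have hsuccH : ∀ y, y ∈ L → y ≠ v → ¬ H (succ y) :=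
      fun y hy hyv hh => hHL _ hh (hsuccL y hy hyv)
    -- |N| ≥ k
    have hNk : k ≤ N.card := by
      by_contra hNk'; push_neg at hNk'
      have hex : ∃ r, ¬ H r ∧ r ∉ N := by
        by_contra hexn; push_neg at hexn
        have h01 : (0:ℕ) + 1 < L.length := by omega
        have h0L : L[0] ∈ L := List.getElem_mem (by omega)
        have h1L : L[1] ∈ L := List.getElem_mem (by omega)
        have h0 : L[0] ∈ N := hexn _ (fun hh => (hHL _ hh) h0L)
        have h1 : L[1] ∈ N := hexn _ (fun hh => (hHL _ hh) h1L)
        have hd := decomp_two L 0 h01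
        rw [List.take_zero] at hd
        exact hcons _ _ _ _ hd h0 h1
      obtain ⟨r, hrH, hrN⟩ := hex
      have hconN := hcon N hNk'
      have hwN : w ∉ N := fun hw' => hwL ((hNmem w).mp hw').1
      have hws : w ∈ ((↑N : Set V)ᶜ) := by simpa using hwN
      have hrs : r ∈ ((↑N : Set V)ᶜ) := by simpa using hrN
      have hkey : ∀ (a b : ((↑N : Set V)ᶜ : Set V)) (p : (G.induce ((↑N : Set V)ᶜ)).Walk a b),
          H a.1 → H b.1 := by
        intro a b p
        induction p with
        | nil => exact id
        | cons hadj q ih =>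
          intro ha
          apply ih
          rename_i a' c' b'
          have hGadj : G.Adj a'.1 c'.1 := hadj
          have hcL : c'.1 ∉ L := by
            intro hcL
            have hcN : c'.1 ∈ N := (hNmem c'.1).mpr ⟨hcL, a'.1, ha, G.adj_symm hGadj⟩
            exact (Set.mem_compl_iff _ _).mp c'.2 (Finset.mem_coe.mpr hcN)
          have haL : a'.1 ∉ L := hHL a'.1 ha
          exact ha.trans (SimpleGraph.Adj.reachable (offRel_adj.mpr ⟨hGadj, haL, hcL⟩))
      obtain ⟨p⟩ := hconN.preconnected ⟨w, hws⟩ ⟨r, hrs⟩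
      exact hrH (hkey _ _ p hHw)
    -- the crossing argument
    have hcross : ∀ y₁ y₂, y₁ ∈ N → y₂ ∈ N → y₁ ≠ v → y₂ ≠ v →
        L.idxOf y₁ + 2 ≤ L.idxOf y₂ → G.Adj (succ y₁) (succ y₂) → False := by
      intro y₁ y₂ hy₁N hy₂N hy₁v hy₂v hij hadj
      have hy₁L := ((hNmem y₁).mp hy₁N).1
      have hy₂L := ((hNmem y₂).mp hy₂N).1
      have hj1 := hidx1 y₂ hy₂L hy₂v
      have hi1 := hidx1 y₁ hy₁L hy₁v
      have hd := decomp_four L (L.idxOf y₁) (L.idxOf y₂) hij hj1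
      rw [List.getElem_idxOf (hidx y₁ hy₁L), List.getElem_idxOf (hidx y₂ hy₂L),
        ← hsucc_eq y₁ hi1, ← hsucc_eq y₂ hj1] at hd
      obtain ⟨-, x₁, hx₁H, hy₁x₁⟩ := (hNmem y₁).mp hy₁N
      obtain ⟨-, x₂, hx₂H, hy₂x₂⟩ := (hNmem y₂).mp hy₂N
      obtain ⟨Q, hQC, hQN, hQh, hQl, hQH⟩ := exists_H_path hx₁H hx₂H
      exact cross_surgery hL hmax hd hQC hQN (fun a ha => hHL a (hQH a ha))
        hQh hQl hy₁x₁ (G.adj_symm hy₂x₂) hadj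
    -- independent set
    set I : Finset V := insert w ((N.erase v).image succ) with hI
    have hmemI : ∀ a, a ∈ I → a = w ∨ ∃ y, y ∈ N ∧ y ≠ v ∧ succ y = a := by
      intro a ha
      rw [hI, Finset.mem_insert] at ha
      rcases ha with rfl | ha
      · exact Or.inl rfl
      · obtain ⟨y, hy, hya⟩ := Finset.mem_image.mp ha
        rw [Finset.mem_erase] at hy
        exact Or.inr ⟨y, hy.2, hy.1, hya⟩
    have hadjw : ∀ y, y ∈ N → y ≠ v → ¬ G.Adj w (succ y) := by
      intro y hyN hyv hadj
      have hyL := ((hNmem y).mp hyN).1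
      have : succ y ∈ N := (hNmem _).mpr ⟨hsuccL y hyL hyv, w, hHw, G.adj_symm hadj⟩
      exact hsuccN y hyN hyv this
    have hIind : ∀ a ∈ I, ∀ b ∈ I, ¬ G.Adj a b := by
      intro a ha b hb hab
      rcases hmemI a ha with rfl | ⟨y₁, hy₁N, hy₁v, rfl⟩ <;>
        rcases hmemI b hb with h | ⟨y₂, hy₂N, hy₂v, h2⟩
      · subst h; exact G.loopless.irrefl _ hab
      · subst h2; exact hadjw y₂ hy₂N hy₂v hab
      · subst h; exact hadjw y₁ hy₁N hy₁v (G.adj_symm hab)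
      · subst h2
        have hy₁L := ((hNmem y₁).mp hy₁N).1
        have hy₂L := ((hNmem y₂).mp hy₂N).1
        by_cases hyeq : y₁ = y₂
        · subst hyeq; exact G.loopless.irrefl _ hab
        · have hij : L.idxOf y₁ ≠ L.idxOf y₂ := by
            intro he
            apply hyeq
            have g1 : L[L.idxOf y₁]? = some y₁ := by
              rw [List.getElem?_eq_getElem (hidx y₁ hy₁L), List.getElem_idxOf]
            have g2 : L[L.idxOf y₂]? = some y₂ := by
              rw [List.getElem?_eq_getElem (hidx y₂ hy₂L), List.getElem_idxOf]
            rw [he] at g1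
            exact Option.some.inj (g1.symm.trans g2)
          have hstep : ∀ z₁ z₂, z₁ ∈ N → z₂ ∈ N → z₁ ≠ v → z₂ ≠ v →
              L.idxOf z₁ < L.idxOf z₂ → G.Adj (succ z₁) (succ z₂) → False := by
            intro z₁ z₂ hz₁N hz₂N hz₁v hz₂v hlt hadj'
            have hz₁L := ((hNmem z₁).mp hz₁N).1
            have hz₂L := ((hNmem z₂).mp hz₂N).1
            have hne2 : L.idxOf z₁ + 1 ≠ L.idxOf z₂ := by
              intro he
              have h1 := hidx1 z₁ hz₁L hz₁v
              have : succ z₁ = z₂ := by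
                have g1 : L[L.idxOf z₁ + 1]? = some (succ z₁) := by
                  rw [List.getElem?_eq_getElem h1, hsucc_eq z₁ h1]
                rw [he] at g1
                have g2 : L[L.idxOf z₂]? = some z₂ := by
                  rw [List.getElem?_eq_getElem (hidx z₂ hz₂L), List.getElem_idxOf]
                exact Option.some.inj (g1.symm.trans g2)
              rw [← this] at hz₂N
              exact hsuccN z₁ hz₁N hz₁v hz₂N
            exact hcross z₁ z₂ hz₁N hz₂N hz₁v hz₂v (by omega) hadj'
          rcases lt_or_gt_of_ne hij with hlt | hgt
          · exact hstep y₁ y₂ hy₁N hy₂N hy₁v hy₂v hlt hab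
          · exact hstep y₂ y₁ hy₂N hy₁N hy₂v hy₁v hgt (G.adj_symm hab)
    -- cardinality
    have hinj : Set.InjOn succ ↑(N.erase v) := by
      intro y₁ h₁ y₂ h₂ heq
      rw [Finset.coe_erase, Set.mem_diff] at h₁ h₂
      have hy₁L := ((hNmem y₁).mp h₁.1).1
      have hy₂L := ((hNmem y₂).mp h₂.1).1
      have hy₁v : y₁ ≠ v := by simpa using h₁.2
      have hy₂v : y₂ ≠ v := by simpa using h₂.2
      have h1 := hidx1 y₁ hy₁L hy₁v
      have h2 := hidx1 y₂ hy₂L hy₂v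
      rw [hsucc_eq y₁ h1, hsucc_eq y₂ h2] at heq
      have := (hnodup.getElem_inj_iff).mp heq
      have he : L.idxOf y₁ = L.idxOf y₂ := by omega
      have g1 : L[L.idxOf y₁]? = some y₁ := by
        rw [List.getElem?_eq_getElem (hidx y₁ hy₁L), List.getElem_idxOf]
      have g2 : L[L.idxOf y₂]? = some y₂ := by
        rw [List.getElem?_eq_getElem (hidx y₂ hy₂L), List.getElem_idxOf]
      rw [he] at g1
      exact Option.some.inj (g1.symm.trans g2)
    have hwimg : w ∉ (N.erase v).image succ := by
      intro hw'
      obtain ⟨y, hy, hyw⟩ := Finset.mem_image.mp hw'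
      rw [Finset.mem_erase] at hy
      have := hsuccL y ((hNmem y).mp hy.2).1 hy.1
      rw [hyw] at this
      exact hwL this
    have hIcard : k ≤ I.card := by
      rw [hI, Finset.card_insert_of_notMem hwimg, Finset.card_image_of_injOn hinj]
      by_cases hvN : v ∈ N
      · rw [Finset.card_erase_of_mem hvN]; omega
      · rw [Finset.erase_eq_of_notMem hvN]; omega
    have := hind I hIind
    omega


theorem laplacian_hamiltonian_connected (G : SimpleGraph V) [DecidableRel G.Adj] (k : ℕ)
    (hn : 3 ≤ Fintype.card V) (hk : G.IsKConnected k)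
    (hμ : lapSpecRad G <
      (Fintype.card V : ℝ) * (G.minDegree : ℝ) / ((Fintype.card V : ℝ) - k)) :
    G.IsHamiltonianConnected := by
  classical
  have hVne : Nonempty V := Fintype.card_pos_iff.mp (by omega)
  obtain ⟨hkn, hcon⟩ := hk
  have hnk : (0:ℝ) < (Fintype.card V : ℝ) - k := by
    have : (k:ℝ) < (Fintype.card V : ℝ) := by exact_mod_cast hkn
    linarith
  have hn0 : (0:ℝ) < (Fintype.card V : ℝ) := by
    have : 0 < Fintype.card V := by omega
    exact_mod_cast this
  have hδ1 : 1 ≤ G.minDegree := by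
    by_contra h
    push_neg at h
    have h0 : G.minDegree = 0 := by omega
    rw [h0] at hμ
    simp only [Nat.cast_zero, mul_zero, zero_div] at hμ
    exact absurd hμ (not_lt.mpr (lapSpecRad_nonneg G))
  have hδ0 : (0:ℝ) < (G.minDegree : ℝ) := by exact_mod_cast hδ1
  have hbound : ∀ S : Finset V, (∀ a ∈ S, ∀ b ∈ S, ¬ G.Adj a b) → S.Nonempty → S.card < k := by
    intro S hS hne
    have h1 := indep_spectral_bound G hδ1 (S := S) hS hne
    have hlt := lt_of_le_of_lt h1 hμ
    have hslt : S.card < Fintype.card V := by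
      obtain ⟨a, ha⟩ := hne
      have hdeg : 0 < G.degree a := lt_of_lt_of_le hδ1 (G.minDegree_le_degree a)
      rw [← card_neighborFinset_eq_degree, Finset.card_pos] at hdeg
      obtain ⟨b, hb⟩ := hdeg
      rw [SimpleGraph.mem_neighborFinset] at hb
      have hbS : b ∉ S := fun hbS => hS a ha b hbS hb
      have hSne : S ≠ Finset.univ := fun h => hbS (h ▸ Finset.mem_univ b)
      have := Finset.card_lt_card (Finset.ssubset_univ_iff.mpr hSne)
      simpa [Finset.card_univ] using this
    have h2 : (0:ℝ) < (Fintype.card V : ℝ) - S.card := by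
      have : (S.card : ℝ) < (Fintype.card V : ℝ) := by exact_mod_cast hslt
      linarith
    rw [div_lt_div_iff₀ h2 hnk] at hlt
    have hnd : (0:ℝ) < (Fintype.card V : ℝ) * G.minDegree := by positivity
    have h3 : (Fintype.card V : ℝ) - k < (Fintype.card V : ℝ) - S.card := by
      nlinarith
    have : (S.card : ℝ) < (k : ℝ) := by linarith
    exact_mod_cast this
  have hk2 : 1 < k := by
    obtain ⟨a⟩ := hVne
    have := hbound {a} (by
      intro x hx y hy
      simp only [Finset.mem_singleton] at hx hy
      rw [hx, hy]
      exact G.loopless.irrefl _) ⟨a, Finset.mem_singleton_self a⟩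
    simpa using this
  have hind : ∀ S : Finset V, (∀ a ∈ S, ∀ b ∈ S, ¬ G.Adj a b) → S.card < k := by
    intro S hS
    rcases S.eq_empty_or_nonempty with rfl | hne
    · simpa using hk2.le.trans_lt' (by omega)
    · exact hbound S hS hne
  exact ce_ham_connected G k hkn hcon hind
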